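/- Let $F(z)$ be a meromorphic function on a vertical strip $\sigma_1 < \mathrm{Re}(z) < \sigma_2$, holomorphic away from possible simple poles at $z = 0, \pm 1$, and vertically of moderate growth (i.e., for any closed substrip there exist $N, \delta > 0$ with $|F(z)| \ll (1+|\mathrm{Im}(z)|)^N$ for $|\mathrm{Im}(z)| \geq \delta$). Suppose there exists $\sigma \in (\sigma_1, \sigma_2)$ with $\sigma \neq 0, \pm 1$ such that $\int_{\mathrm{Re}(z)=\sigma} F(z)\beta(z)\,dz = 0$ for all entire functions $\beta$ that are rapidly decreasing on vertical strips and satisfy $\beta(0) = \beta(\pm 1) = \beta'(\pm 1) = 0$. Then $F(z) = 0$ identically on the strip. -/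

import Mathlib

open Complex MeasureTheory

lemma polyexp (k : ℕ) (t : ℝ) :
    (1 + |t|) ^ k * Real.exp (-t ^ 2) ≤ Real.exp ((k : ℝ) ^ 2 / 2) * Real.exp (-t ^ 2 / 2) := by
  have h1 : (1 + |t|) ^ k ≤ Real.exp ((k : ℝ) * |t|) := by
    have := pow_le_pow_left₀ (by positivity) ((add_comm (1:ℝ) |t|) ▸ Real.add_one_le_exp |t|) k
    calc (1 + |t|) ^ k ≤ Real.exp |t| ^ k := this
      _ = Real.exp ((k : ℝ) * |t|) := by rw [← Real.exp_nat_mul]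
  have h2 : (k : ℝ) * |t| ≤ (k : ℝ) ^ 2 / 2 + t ^ 2 / 2 := by
    nlinarith [sq_nonneg ((k : ℝ) - |t|), _root_.sq_abs t]
  calc (1 + |t|) ^ k * Real.exp (-t ^ 2)
      ≤ Real.exp ((k : ℝ) ^ 2 / 2 + t ^ 2 / 2) * Real.exp (-t ^ 2) := by
        apply mul_le_mul_of_nonneg_right _ (Real.exp_nonneg _)
        exact h1.trans (Real.exp_le_exp.2 h2)
    _ = Real.exp ((k : ℝ) ^ 2 / 2) * Real.exp (-t ^ 2 / 2) := by
        rw [← Real.exp_add, ← Real.exp_add]; ring_nf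

lemma polyexp5 (k : ℕ) (t : ℝ) :
    (1 + |t|) ^ 5 * Real.exp (-t ^ 2) * (1 + |t|) ^ k ≤
      Real.exp (((5 + k : ℕ) : ℝ) ^ 2 / 2) * Real.exp (-t ^ 2 / 2) := by
  calc (1 + |t|) ^ 5 * Real.exp (-t ^ 2) * (1 + |t|) ^ k
      = (1 + |t|) ^ (5 + k) * Real.exp (-t ^ 2) := by rw [pow_add]; ring
    _ ≤ _ := polyexp (5 + k) t

lemma hasDerivAt_beta (s σ : ℝ) (z : ℂ) :
    HasDerivAt (fun z : ℂ => z * (z ^ 2 - 1) ^ 2 * Complex.exp (z ^ 2 - s * (z - σ)))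
      (((z ^ 2 - 1) ^ 2 + z * (2 * (z ^ 2 - 1) ^ 1 * (2 * z ^ 1))) *
          Complex.exp (z ^ 2 - s * (z - σ)) +
        z * (z ^ 2 - 1) ^ 2 * (Complex.exp (z ^ 2 - s * (z - σ)) * (2 * z ^ 1 - s))) z := by
  have hp : HasDerivAt (fun z : ℂ => z * (z ^ 2 - 1) ^ 2)
      (1 * (z ^ 2 - 1) ^ 2 + z * (2 * (z ^ 2 - 1) ^ 1 * (2 * z ^ 1))) z :=
    (hasDerivAt_id z).mul (((hasDerivAt_pow 2 z).sub_const 1).pow 2)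
  have hE : HasDerivAt (fun z : ℂ => Complex.exp (z ^ 2 - s * (z - σ)))
      (Complex.exp (z ^ 2 - s * (z - σ)) * (2 * z ^ 1 - s)) z := by
    have h : HasDerivAt (fun z : ℂ => z ^ 2 - s * (z - σ)) (2 * z ^ 1 - s) z := by
      have := ((hasDerivAt_id z).sub_const (σ : ℂ)).const_mul (s : ℂ)
      exact ((hasDerivAt_pow 2 z).sub this).congr_deriv (by norm_num)
    exact h.cexp
  have := hp.mul hE
  exact this.congr_deriv (by ring)

lemma norm_beta_le (s σ M : ℝ) (z : ℂ) (hM : |z.re| ≤ M) :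
    ‖z * (z ^ 2 - 1) ^ 2 * Complex.exp (z ^ 2 - s * (z - σ))‖ ≤
      4 * (M + 1) ^ 5 * Real.exp (M ^ 2 + |s| * (M + |σ|)) *
        ((1 + |z.im|) ^ 5 * Real.exp (-z.im ^ 2)) := by
  have hM0 : 0 ≤ M := le_trans (abs_nonneg _) hM
  set x := z.re; set t := z.im
  have hu : (1 : ℝ) ≤ 1 + |t| := by simp [abs_nonneg]
  have hz : ‖z‖ ≤ (M + 1) * (1 + |t|) := by
    have h1 := Complex.norm_le_abs_re_add_abs_im z
    have h : ‖z‖ = ‖z‖ := rfl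
    nlinarith [abs_nonneg t]
  have hz0 : (0:ℝ) ≤ ‖z‖ := norm_nonneg _
  have hz2 : ‖z ^ 2 - 1‖ ≤ 2 * (M + 1) ^ 2 * (1 + |t|) ^ 2 := by
    calc ‖z ^ 2 - 1‖ ≤ ‖z ^ 2‖ + ‖(1 : ℂ)‖ := norm_sub_le _ _
      _ = ‖z‖ ^ 2 + 1 := by rw [norm_pow, norm_one]
      _ ≤ 2 * (M + 1) ^ 2 * (1 + |t|) ^ 2 := by
          have hP : (1:ℝ) ≤ (M + 1) * (1 + |t|) := by nlinarith
          nlinarith [mul_le_mul hz hz hz0 (le_trans zero_le_one hP),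
            mul_le_mul hP hP zero_le_one (le_trans zero_le_one hP)]
  have hexp : ‖Complex.exp (z ^ 2 - s * (z - σ))‖ ≤
      Real.exp (M ^ 2 + |s| * (M + |σ|)) * Real.exp (-t ^ 2) := by
    rw [Complex.norm_exp, ← Real.exp_add]
    apply Real.exp_le_exp.2
    have hre : (z ^ 2 - (s : ℂ) * (z - (σ : ℂ))).re = x ^ 2 - t ^ 2 - s * (x - σ) := by
      simp [Complex.sub_re, Complex.mul_re, pow_two, Complex.ofReal_re, Complex.ofReal_im]; rfl
    rw [hre]
    have h1 : x ^ 2 ≤ M ^ 2 := by nlinarith [abs_nonneg x, le_abs_self x, neg_abs_le x]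
    have h2 : -(s * (x - σ)) ≤ |s| * (M + |σ|) := by
      calc -(s * (x - σ)) ≤ |s * (x - σ)| := neg_le_abs _
        _ = |s| * |x - σ| := abs_mul _ _
        _ ≤ |s| * (M + |σ|) := by
            apply mul_le_mul_of_nonneg_left _ (abs_nonneg s)
            calc |x - σ| ≤ |x| + |σ| := abs_sub _ _
              _ ≤ M + |σ| := by linarith
    linarith
  have h2nn : (0:ℝ) ≤ ‖z ^ 2 - 1‖ := norm_nonneg _
  calc ‖z * (z ^ 2 - 1) ^ 2 * Complex.exp (z ^ 2 - s * (z - σ))‖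
      = ‖z‖ * ‖z ^ 2 - 1‖ ^ 2 * ‖Complex.exp (z ^ 2 - s * (z - σ))‖ := by
        rw [norm_mul, norm_mul, norm_pow]
    _ ≤ ((M + 1) * (1 + |t|)) * (2 * (M + 1) ^ 2 * (1 + |t|) ^ 2) ^ 2 *
        (Real.exp (M ^ 2 + |s| * (M + |σ|)) * Real.exp (-t ^ 2)) := by
        apply mul_le_mul (mul_le_mul hz (by nlinarith) (by positivity) (by positivity)) hexp
          (norm_nonneg _) (by positivity)
    _ = 4 * (M + 1) ^ 5 * Real.exp (M ^ 2 + |s| * (M + |σ|)) *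
        ((1 + |t|) ^ 5 * Real.exp (-t ^ 2)) := by ring

/-- The test functions: all hvanish hypotheses for `β_s z = z (z²-1)² exp(z² - s(z-σ))`. -/
lemma beta_decay (s σ : ℝ) (a b N : ℝ) : ∃ C : ℝ, ∀ z : ℂ, a ≤ z.re → z.re ≤ b →
    ‖z * (z ^ 2 - 1) ^ 2 * Complex.exp (z ^ 2 - s * (z - σ))‖ ≤ C * (1 + |z.im|) ^ (-N) := by
  set M := max |a| |b| with hMdef
  set m : ℕ := ⌈|N|⌉₊ with hmdef
  have hNm : N ≤ (m : ℝ) := le_trans (le_abs_self N) (Nat.le_ceil _)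
  set K := 4 * (M + 1) ^ 5 * Real.exp (M ^ 2 + |s| * (M + |σ|)) with hKdef
  have hM0 : 0 ≤ M := le_trans (abs_nonneg a) (le_max_left _ _)
  have hK0 : 0 ≤ K := by positivity
  refine ⟨K * Real.exp (((5 + m : ℕ) : ℝ) ^ 2 / 2), fun z hza hzb => ?_⟩
  set t := z.im
  have h1t : (0:ℝ) < 1 + |t| := by positivity
  have hu : (1:ℝ) ≤ 1 + |t| := by simp [abs_nonneg]
  have hMx : |z.re| ≤ M := by
    rw [abs_le]
    constructor
    · calc -M ≤ -|a| := by simp [hMdef, le_max_left]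
        _ ≤ a := neg_abs_le a
        _ ≤ z.re := hza
    · calc z.re ≤ b := hzb
        _ ≤ |b| := le_abs_self b
        _ ≤ M := le_max_right _ _
  have hβ := norm_beta_le s σ M z hMx
  have hmono : (1 + |t|) ^ (-(m:ℝ)) ≤ (1 + |t|) ^ (-N) :=
    Real.rpow_le_rpow_of_exponent_le hu (neg_le_neg hNm)
  have hCpos : (0:ℝ) ≤ K * Real.exp (((5 + m : ℕ) : ℝ) ^ 2 / 2) := by positivity
  refine le_trans ?_ (mul_le_mul_of_nonneg_left hmono hCpos)
  rw [Real.rpow_neg h1t.le, Real.rpow_natCast, ← div_eq_mul_inv, le_div_iff₀ (by positivity)]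
  calc ‖z * (z ^ 2 - 1) ^ 2 * Complex.exp (z ^ 2 - s * (z - σ))‖ * (1 + |t|) ^ m
      ≤ K * ((1 + |t|) ^ 5 * Real.exp (-t ^ 2)) * (1 + |t|) ^ m :=
        mul_le_mul_of_nonneg_right hβ (by positivity)
    _ = K * ((1 + |t|) ^ 5 * Real.exp (-t ^ 2) * (1 + |t|) ^ m) := by ring
    _ ≤ K * (Real.exp (((5 + m : ℕ) : ℝ) ^ 2 / 2) * Real.exp (-t ^ 2 / 2)) :=
        mul_le_mul_of_nonneg_left (polyexp5 m t) hK0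
    _ ≤ K * (Real.exp (((5 + m : ℕ) : ℝ) ^ 2 / 2) * 1) := by
        apply mul_le_mul_of_nonneg_left _ hK0
        apply mul_le_mul_of_nonneg_left _ (Real.exp_nonneg _)
        apply Real.exp_le_one_iff.2
        nlinarith [sq_nonneg t]
    _ = K * Real.exp (((5 + m : ℕ) : ℝ) ^ 2 / 2) := by ring

/-- A meromorphic function `F` on a vertical strip `σ₁ < Re z < σ₂`
(written `F = G / (z (z²-1))` with `G` holomorphic, so the only possible poles are simple
ones at `z = 0, ±1`), vertically of moderate growth, which is annihilated by pairing against
every entire, vertically rapidly decreasing test function `β` with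
`β(0) = β(±1) = β'(±1) = 0` along some vertical line `Re z = σ` (`σ ≠ 0, ±1`),
vanishes identically on the strip. -/
theorem stmt_1 (σ₁ σ₂ : ℝ) (hσ : σ₁ < σ₂) (F G : ℂ → ℂ)
    (hG : DifferentiableOn ℂ G {z : ℂ | σ₁ < z.re ∧ z.re < σ₂})
    (hFG : ∀ z : ℂ, σ₁ < z.re → z.re < σ₂ → z ≠ 0 → z ≠ 1 → z ≠ -1 →
      F z = G z / (z * (z ^ 2 - 1)))
    (hgrowth : ∀ a b : ℝ, σ₁ < a → b < σ₂ →
      ∃ N C δ : ℝ, 0 < δ ∧ ∀ z : ℂ, a ≤ z.re → z.re ≤ b → δ ≤ |z.im| →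
        ‖F z‖ ≤ C * (1 + |z.im|) ^ N)
    (σ : ℝ) (hσ₁ : σ₁ < σ) (hσ₂ : σ < σ₂) (hσ0 : σ ≠ 0) (hσp : σ ≠ 1) (hσm : σ ≠ -1)
    (hvanish : ∀ β : ℂ → ℂ, Differentiable ℂ β →
      β 0 = 0 → β 1 = 0 → β (-1) = 0 → deriv β 1 = 0 → deriv β (-1) = 0 →
      (∀ a b N : ℝ, ∃ C : ℝ, ∀ z : ℂ, a ≤ z.re → z.re ≤ b →
        ‖β z‖ ≤ C * (1 + |z.im|) ^ (-N)) →
      (∫ t : ℝ, F (σ + t * I) * β (σ + t * I)) = 0) :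
    ∀ z : ℂ, σ₁ < z.re → z.re < σ₂ → z ≠ 0 → z ≠ 1 → z ≠ -1 → F z = 0 := by
  intro z₀ hz₀1 hz₀2 hz₀0 hz₀p hz₀m
  set U : Set ℂ := {z : ℂ | σ₁ < z.re ∧ z.re < σ₂} with hUdef
  set ℓ : ℝ → ℂ := fun t => (σ : ℂ) + (t : ℂ) * I with hℓdef
  have hℓre : ∀ t : ℝ, (ℓ t).re = σ := by intro t; simp [hℓdef]
  have hℓim : ∀ t : ℝ, (ℓ t).im = t := by intro t; simp [hℓdef]
  have hℓ0 : ∀ t : ℝ, ℓ t ≠ 0 := by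
    intro t h; apply hσ0
    have := congrArg Complex.re h; rwa [hℓre] at this
  have hℓp : ∀ t : ℝ, ℓ t ≠ 1 := by
    intro t h; apply hσp
    have := congrArg Complex.re h; rw [hℓre] at this; simpa using this
  have hℓm : ∀ t : ℝ, ℓ t ≠ -1 := by
    intro t h; apply hσm
    have := congrArg Complex.re h; rw [hℓre] at this; simpa using this
  have hℓsq : ∀ t : ℝ, (ℓ t) ^ 2 - 1 ≠ 0 := by
    intro t h
    have h2 : (ℓ t - 1) * (ℓ t + 1) = 0 := by linear_combination h
    rcases mul_eq_zero.1 h2 with h3 | h3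
    · exact hℓp t (by linear_combination h3)
    · exact hℓm t (by linear_combination h3)
  have hℓd : ∀ t : ℝ, ℓ t * ((ℓ t) ^ 2 - 1) ≠ 0 := fun t => mul_ne_zero (hℓ0 t) (hℓsq t)
  have hℓU : ∀ t : ℝ, ℓ t ∈ U := fun t => by
    rw [hUdef]; constructor <;> rw [hℓre] <;> [exact hσ₁; exact hσ₂]
  -- test functions
  set B : ℝ → ℂ → ℂ := fun s z => z * (z ^ 2 - 1) ^ 2 * Complex.exp (z ^ 2 - s * (z - σ))
    with hBdef
  have hBvanish : ∀ s : ℝ, (∫ t : ℝ, F (σ + t * I) * B s (σ + t * I)) = 0 := by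
    intro s
    apply hvanish
    · exact fun z => (hasDerivAt_beta s σ z).differentiableAt
    · simp [hBdef]
    · simp [hBdef]
    · simp [hBdef]
    · rw [(hasDerivAt_beta s σ 1).deriv]; norm_num
    · rw [(hasDerivAt_beta s σ (-1)).deriv]; norm_num
    · exact beta_decay s σ
  -- the function g and its alternative form h
  set g : ℝ → ℂ := fun t => F (ℓ t) * B 0 (ℓ t) with hgdef
  have hgh : ∀ t : ℝ, g t = G (ℓ t) * (((ℓ t) ^ 2 - 1) * Complex.exp ((ℓ t) ^ 2 - (0:ℝ) * (ℓ t - σ))) := by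
    intro t
    rw [hgdef]
    simp only [hBdef]
    rw [hFG (ℓ t) (hℓU t).1 (hℓU t).2 (hℓ0 t) (hℓp t) (hℓm t),
      div_mul_eq_mul_div, div_eq_iff (hℓd t)]
    ring
  have hcont : Continuous g := by
    have hℓc : Continuous ℓ := by fun_prop
    have hGc : Continuous fun t => G (ℓ t) :=
      (hG.continuousOn).comp_continuous hℓc hℓU
    have : Continuous fun t => G (ℓ t) * (((ℓ t) ^ 2 - 1) * Complex.exp ((ℓ t) ^ 2 - (0:ℝ) * (ℓ t - σ))) := by
      apply hGc.mul
      apply Continuous.mul (by fun_prop)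
      exact Complex.continuous_exp.comp (by fun_prop)
    exact (funext hgh : g = _) ▸ this
  -- integrability of g
  obtain ⟨N, C, δ, hδ, hFb⟩ := hgrowth σ σ hσ₁ hσ₂
  set m : ℕ := ⌈|N|⌉₊ with hmdef
  have hNm : N ≤ (m : ℝ) := le_trans (le_abs_self N) (Nat.le_ceil _)
  set K : ℝ := 4 * (|σ| + 1) ^ 5 * Real.exp (|σ| ^ 2 + |(0:ℝ)| * (|σ| + |σ|)) with hKdef
  have hK0 : (0:ℝ) ≤ K := by positivity
  have hB0 : ∀ t : ℝ, ‖B 0 (ℓ t)‖ ≤ K * ((1 + |t|) ^ 5 * Real.exp (-t ^ 2)) := by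
    intro t
    have := norm_beta_le 0 σ |σ| (ℓ t) (by rw [hℓre])
    rw [hℓim] at this
    exact this
  set D₁ : ℝ := max C 0 * K * Real.exp (((5 + m : ℕ) : ℝ) ^ 2 / 2) with hD₁def
  obtain ⟨C₂, hC₂⟩ := (isCompact_Icc : IsCompact (Set.Icc (-δ) δ)).exists_bound_of_continuousOn
    hcont.continuousOn
  set D : ℝ := max D₁ (max C₂ 0 * Real.exp (δ ^ 2 / 2)) with hDdef
  have hgbound : ∀ t : ℝ, ‖g t‖ ≤ D * Real.exp (-(1/2) * t ^ 2) := by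
    intro t
    have hexp : Real.exp (-(1/2) * t ^ 2) = Real.exp (-t ^ 2 / 2) := by ring_nf
    rw [hexp]
    rcases le_or_gt δ |t| with ht | ht
    · -- growth bound region
      have hF := hFb (ℓ t) (by rw [hℓre]) (by rw [hℓre]) (by rwa [hℓim])
      rw [hℓim] at hF
      have h1t : (0:ℝ) < 1 + |t| := by positivity
      have hu : (1:ℝ) ≤ 1 + |t| := by simp [abs_nonneg]
      have hrN : (1 + |t|) ^ N ≤ (1 + |t|) ^ (m : ℕ) := by
        calc (1 + |t|) ^ N ≤ (1 + |t|) ^ ((m : ℕ) : ℝ) :=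
              Real.rpow_le_rpow_of_exponent_le hu hNm
          _ = (1 + |t|) ^ (m : ℕ) := Real.rpow_natCast _ _
      have hFpos : ‖F (ℓ t)‖ ≤ max C 0 * (1 + |t|) ^ (m : ℕ) := by
        calc ‖F (ℓ t)‖ ≤ C * (1 + |t|) ^ N := hF
          _ ≤ max C 0 * (1 + |t|) ^ N := by
              apply mul_le_mul_of_nonneg_right (le_max_left _ _) (Real.rpow_nonneg h1t.le _)
          _ ≤ max C 0 * (1 + |t|) ^ (m : ℕ) := by
              apply mul_le_mul_of_nonneg_left hrN (le_max_right _ _)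
      calc ‖g t‖ = ‖F (ℓ t)‖ * ‖B 0 (ℓ t)‖ := norm_mul _ _
        _ ≤ (max C 0 * (1 + |t|) ^ (m : ℕ)) * (K * ((1 + |t|) ^ 5 * Real.exp (-t ^ 2))) := by
            apply mul_le_mul hFpos (hB0 t) (norm_nonneg _) (by positivity)
        _ = max C 0 * K * ((1 + |t|) ^ 5 * Real.exp (-t ^ 2) * (1 + |t|) ^ (m : ℕ)) := by ring
        _ ≤ max C 0 * K * (Real.exp (((5 + m : ℕ) : ℝ) ^ 2 / 2) * Real.exp (-t ^ 2 / 2)) := by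
            apply mul_le_mul_of_nonneg_left (polyexp5 m t) (by positivity)
        _ = D₁ * Real.exp (-t ^ 2 / 2) := by rw [hD₁def]; ring
        _ ≤ D * Real.exp (-t ^ 2 / 2) :=
            mul_le_mul_of_nonneg_right (le_max_left _ _) (Real.exp_nonneg _)
    · -- compact region
      have htt : t ∈ Set.Icc (-δ) δ := by
        constructor <;> [linarith [neg_abs_le t]; linarith [le_abs_self t]]
      have h1 : ‖g t‖ ≤ max C₂ 0 := le_trans (hC₂ t htt) (le_max_left _ _)
      have h2 : (1:ℝ) ≤ Real.exp (δ ^ 2 / 2) * Real.exp (-t ^ 2 / 2) := by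
        rw [← Real.exp_add]
        apply Real.one_le_exp
        nlinarith [abs_nonneg t, _root_.sq_abs t, le_abs_self t]
      calc ‖g t‖ ≤ max C₂ 0 := h1
        _ ≤ max C₂ 0 * (Real.exp (δ ^ 2 / 2) * Real.exp (-t ^ 2 / 2)) := by
            nlinarith [le_max_right C₂ 0, Real.exp_nonneg (δ^2/2), Real.exp_nonneg (-t^2/2)]
        _ = (max C₂ 0 * Real.exp (δ ^ 2 / 2)) * Real.exp (-t ^ 2 / 2) := by ring
        _ ≤ D * Real.exp (-t ^ 2 / 2) :=
            mul_le_mul_of_nonneg_right (le_max_right _ _) (Real.exp_nonneg _)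
  have hint : Integrable g := by
    apply Integrable.mono' ((integrable_exp_neg_mul_sq (by norm_num : (0:ℝ) < 1/2)).const_mul D)
      hcont.aestronglyMeasurable
    exact ae_of_all _ fun t => by simpa using hgbound t
  -- Fourier transform of g vanishes
  have hF0 : ∀ w : ℝ, FourierTransform.fourier g w = 0 := by
    intro w
    rw [Real.fourier_real_eq_integral_exp_smul]
    have heq : ∀ t : ℝ, Complex.exp (↑(-2 * Real.pi * t * w) * I) • g t =
        F (σ + t * I) * B (2 * Real.pi * w) (σ + t * I) := by
      intro t
      simp only [smul_eq_mul, hgdef, hBdef, hℓdef]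
      rw [show ((σ:ℂ) + t * I) ^ 2 - ((2 * Real.pi * w : ℝ) : ℂ) * (((σ:ℂ) + t * I) - σ) =
          (((σ:ℂ) + t * I) ^ 2 - ((0:ℝ):ℂ) * (((σ:ℂ) + t * I) - σ)) +
            ((-2 * Real.pi * t * w : ℝ) : ℂ) * I by push_cast; ring, Complex.exp_add]
      ring
    calc (∫ t : ℝ, Complex.exp (↑(-2 * Real.pi * t * w) * I) • g t)
        = ∫ t : ℝ, F (σ + t * I) * B (2 * Real.pi * w) (σ + t * I) := by
          apply integral_congr_ae
          filter_upwards with t using heq t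
      _ = 0 := hBvanish (2 * Real.pi * w)
  -- invert
  have hg0 : ∀ t : ℝ, g t = 0 := by
    have h3 : FourierTransform.fourier g = 0 := funext hF0
    have h4 := hcont.fourier_fourierInv_eq hint (by rw [h3]; exact integrable_zero _ _ _)
    rw [Real.fourierInv_comm, h3] at h4
    intro t
    rw [← h4]
    simp [Real.fourierInv_eq]
  -- G vanishes on the line
  have hGline : ∀ t : ℝ, G (ℓ t) = 0 := by
    intro t
    have h1 := hg0 t
    rw [hgh t] at h1
    rcases mul_eq_zero.1 h1 with h2 | h2
    · exact h2
    · exact absurd h2 (mul_ne_zero (hℓsq t) (Complex.exp_ne_zero _))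
  -- identity theorem
  have hUopen : IsOpen U := by
    have : U = Complex.re ⁻¹' Set.Ioo σ₁ σ₂ := rfl
    rw [this]
    exact isOpen_Ioo.preimage Complex.continuous_re
  have hUconv : Convex ℝ U := by
    have : U = Complex.reLm ⁻¹' Set.Ioo σ₁ σ₂ := rfl
    rw [this]
    exact (convex_Ioo σ₁ σ₂).linear_preimage _
  have hσU : (σ : ℂ) ∈ U := by
    constructor <;> simp [hσ₁, hσ₂]
  have hfreq : ∃ᶠ w in nhdsWithin (σ : ℂ) {(σ : ℂ)}ᶜ, G w = 0 := by
    have hlim : Filter.Tendsto (fun n : ℕ => ℓ (1 / (n + 1 : ℝ))) Filter.atTop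
        (nhds (σ : ℂ)) := by
      have h0 : Filter.Tendsto (fun n : ℕ => (1 / (n + 1 : ℝ))) Filter.atTop (nhds 0) :=
        tendsto_one_div_add_atTop_nhds_zero_nat
      have h1 : Filter.Tendsto (fun n : ℕ => ((1 / (n + 1 : ℝ) : ℝ) : ℂ)) Filter.atTop
          (nhds ((0 : ℝ) : ℂ)) := (Complex.continuous_ofReal.tendsto 0).comp h0
      have h2 := (h1.mul_const I).const_add (σ : ℂ)
      simpa [hℓdef] using h2
    have hseq : Filter.Tendsto (fun n : ℕ => ℓ (1 / (n + 1 : ℝ))) Filter.atTop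
        (nhdsWithin (σ : ℂ) {(σ : ℂ)}ᶜ) := by
      apply tendsto_nhdsWithin_of_tendsto_nhds_of_eventually_within _ hlim
      apply Filter.Eventually.of_forall
      intro n
      simp only [Set.mem_compl_iff, Set.mem_singleton_iff]
      intro h
      have him := congrArg Complex.im h
      rw [hℓim] at him
      simp only [Complex.ofReal_im] at him
      have hpos : (0:ℝ) < 1 / ((n : ℝ) + 1) := by positivity
      linarith
    exact hseq.frequently (Filter.Frequently.of_forall fun n => hGline _)
  have hGzero : Set.EqOn G 0 U :=
    (hG.analyticOnNhd hUopen).eqOn_zero_of_preconnected_of_frequently_eq_zero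
      hUconv.isPreconnected hσU hfreq
  rw [hFG z₀ hz₀1 hz₀2 hz₀0 hz₀p hz₀m, hGzero ⟨hz₀1, hz₀2⟩]
  simp
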